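/- Let X and Y be real Banach spaces with Y ≠ {0}, and let T : Y* → X** be a linear isometry such that ‖ι_X(x) + T(y*)‖ = ‖x‖ + ‖y*‖ for every x ∈ X and every y* ∈ Y*, where ι_X : X → X** is the canonical embedding. Then for every compact linear operator S : Y* → X one has ‖T + ι_X ∘ S‖ = 1 + ‖S‖ (norms of bounded linear operators from Y* to X**). -/

import Mathlib

open NormedSpace

set_option maxSynthPendingDepth 3

set_option maxHeartbeats 1000000 in
/-- Let `X` and `Y` be real Banach spaces with `Y ≠ {0}`, and let
`T : Y* → X**` be a linear isometry such that `‖ι_X x + T y*‖ = ‖x‖ + ‖y*‖` for every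
`x ∈ X` and every `y* ∈ Y*`. Then for every compact linear operator `S : Y* → X` one has
`‖T + ι_X ∘ S‖ = 1 + ‖S‖` (operator norms of bounded linear operators from `Y*` to `X**`). -/
theorem stmt17 (X : Type) [NormedAddCommGroup X] [NormedSpace ℝ X] [CompleteSpace X]
    (Y : Type) [NormedAddCommGroup Y] [NormedSpace ℝ Y] [CompleteSpace Y] [Nontrivial Y]
    (T : StrongDual ℝ Y →ₗᵢ[ℝ] StrongDual ℝ (StrongDual ℝ X))
    (hT : ∀ (x : X) (y' : StrongDual ℝ Y), ‖inclusionInDoubleDual ℝ X x + T y'‖ = ‖x‖ + ‖y'‖) :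
    ∀ S : StrongDual ℝ Y →L[ℝ] X, IsCompactOperator S →
      ‖T.toContinuousLinearMap + (inclusionInDoubleDual ℝ X).comp S‖ = 1 + ‖S‖ := by
  intro S _
  set A := T.toContinuousLinearMap + (inclusionInDoubleDual ℝ X).comp S with hA
  have key : ∀ y : StrongDual ℝ Y, ‖A y‖ = ‖S y‖ + ‖y‖ := by
    intro y
    have h := hT (S y) y
    have : A y = inclusionInDoubleDual ℝ X (S y) + T y := by
      simp [hA, add_comm]
    rw [this, h]
  apply le_antisymm
  · apply ContinuousLinearMap.opNorm_le_bound _ (by positivity)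
    intro y
    rw [key y, add_mul, one_mul]
    have h1 := S.le_opNorm y
    linarith
  · -- lower bound
    obtain ⟨y0, hy0⟩ := exists_ne (0 : Y)
    obtain ⟨g, hg1, _⟩ := exists_dual_vector ℝ y0 (norm_ne_zero_iff.mpr hy0)
    have hAg : (1 : ℝ) ≤ ‖A‖ := by
      have := A.le_opNorm g
      rw [key g, hg1, mul_one] at this
      linarith [norm_nonneg (S g)]
    refine le_of_forall_pos_le_add ?_
    intro ε hε
    by_cases hS : ‖S‖ ≤ ε
    · linarith
    · push_neg at hS
      have hc : ‖S‖ - ε < ‖S‖ := by linarith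
      obtain ⟨y, hy1, hy2⟩ := S.exists_lt_apply_of_lt_opNorm hc
      have hyne : y ≠ 0 := by
        intro h
        rw [h] at hy2
        simp at hy2
        linarith
      set z := ‖y‖⁻¹ • y with hz
      have hzn : ‖z‖ = 1 := norm_smul_inv_norm hyne
      have hSz : ‖S y‖ ≤ ‖S z‖ := by
        have hypos : 0 < ‖y‖ := norm_pos_iff.mpr hyne
        have : ‖S z‖ = ‖y‖⁻¹ * ‖S y‖ := by
          rw [hz, map_smul, norm_smul, norm_inv, norm_norm]
        rw [this]
        have h1 : (1:ℝ) ≤ ‖y‖⁻¹ := (one_le_inv₀ hypos).2 hy1.le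
        nlinarith [norm_nonneg (S y)]
      have := A.le_opNorm z
      rw [key z, hzn, mul_one] at this
      linarith
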